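/- Let n ≥ 1, ℓ ≥ 2 an integer, α ∈ (0,1], ϰ > 0, and let f : ℝ^n → ℝ be ℓ times continuously differentiable with ‖D^ℓ f(x) - D^ℓ f(y)‖ ≤ ϰ|x-y|^α for all x, y, where D^ℓ f is the ℓ-th Fréchet derivative and ‖·‖ its operator norm. Let x_0, x̃ ∈ ℝ^n, let e be a unit vector, let d ≥ 0, and set x = x̃ - d·e. Assume d ≤ |x - x_0|, |x̃ - x_0| ≤ 2|x - x_0|, and that (-1)^ℓ ∂_e^ℓ f(x_0) = |∂_e^ℓ f(x_0)|, where ∂_e^j f denotes the j-th directional derivative of f along e. Then |∂_e^ℓ f(x_0)| · d^ℓ / ℓ! ≤ f(x) - f(x̃) + Σ_{j=1}^{ℓ-1} (-1)^{j+1} ∂_e^j f(x̃) · d^j / j! + 3ϰ |x - x_0|^{ℓ+α}. -/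

import Mathlib

/-- The `j`-th iterated directional derivative of `f` along `e` at `y`,
`∂_e^j f(y) = D^j f(y)(e,…,e)`. -/
noncomputable def dirDeriv {n : ℕ} (j : ℕ) (f : EuclideanSpace ℝ (Fin n) → ℝ)
    (e y : EuclideanSpace ℝ (Fin n)) : ℝ :=
  iteratedFDeriv ℝ j f y (fun _ => e)

open Set

lemma my_within_eq (f : ℝ → ℝ) {n : ℕ} (hf : ContDiff ℝ n f) {s : Set ℝ}
    (hs : UniqueDiffOn ℝ s) {j : ℕ} (hj : j ≤ n) :
    ∀ x ∈ s, iteratedDerivWithin j f s x = iteratedDeriv j f x := by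
  induction j with
  | zero => intro x hx; simp
  | succ j ih =>
    intro x hx
    have hj' : j ≤ n := Nat.le_of_succ_le hj
    rw [iteratedDerivWithin_succ, iteratedDeriv_succ]
    rw [derivWithin_congr (ih hj') (ih hj' x hx)]
    exact ((hf.differentiable_iteratedDeriv j
      (Nat.cast_lt.mpr hj)).differentiableAt).derivWithin (hs x hx)

lemma my_line_deriv {E : Type*} [NormedAddCommGroup E] [NormedSpace ℝ E]
    (f : E → ℝ) {n : ℕ} (hf : ContDiff ℝ n f) (p v : E) {j : ℕ} (hj : j ≤ n) (t : ℝ) :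
    iteratedDeriv j (fun s : ℝ => f (p + s • v)) t
      = iteratedFDeriv ℝ j f (p + t • v) (fun _ => v) := by
  induction j generalizing t with
  | zero => simp
  | succ j ih =>
    have hj' : j ≤ n := Nat.le_of_succ_le hj
    have hline : ∀ u : ℝ, HasDerivAt (fun s : ℝ => p + s • v) v u := by
      intro u
      simpa using ((hasDerivAt_id u).smul_const v).const_add p
    rw [iteratedDeriv_succ]
    have hEq : iteratedDeriv j (fun s : ℝ => f (p + s • v))
        = fun s : ℝ => iteratedFDeriv ℝ j f (p + s • v) (fun _ => v) :=
      funext fun s => ih hj' s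
    rw [hEq]
    have hdiff : DifferentiableAt ℝ (iteratedFDeriv ℝ j f) (p + t • v) :=
      (hf.differentiable_iteratedFDeriv (Nat.cast_lt.mpr hj)).differentiableAt
    have h1 : HasDerivAt (fun s : ℝ => iteratedFDeriv ℝ j f (p + s • v))
        (fderiv ℝ (iteratedFDeriv ℝ j f) (p + t • v) v) t :=
      hdiff.hasFDerivAt.comp_hasDerivAt t (hline t)
    have h2 := ((ContinuousMultilinearMap.apply ℝ (fun _ : Fin j => E) ℝ
        (fun _ => v)).hasFDerivAt).comp_hasDerivAt t h1
    have h3 := h2.deriv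
    simp only [Function.comp_def, ContinuousMultilinearMap.apply_apply] at h3
    rw [h3, iteratedFDeriv_succ_apply_left]
    rfl

/-- Euclidean form of the higher-order boundary lemma: if `f` is `ℓ` times continuously
differentiable with `α`-Hölder `ℓ`-th derivative (constant `ϰ`), `e` is a unit vector,
`x = xt - d e` with `d ≥ 0`, `d ≤ |x - x₀|`, `|xt - x₀| ≤ 2|x - x₀|` and
`(-1)^ℓ ∂_e^ℓ f(x₀) = |∂_e^ℓ f(x₀)|`, then
`|∂_e^ℓ f(x₀)| d^ℓ/ℓ! ≤ f(x) - f(xt) + Σ_{j=1}^{ℓ-1} (-1)^{j+1} ∂_e^j f(xt) d^j/j!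
  + 3ϰ|x - x₀|^{ℓ+α}`. -/
theorem boundary_higher_order_lemma (n : ℕ) (hn : 1 ≤ n) (ℓ : ℕ) (hℓ : 2 ≤ ℓ) (α ϰ : ℝ)
    (hα₀ : 0 < α) (hα₁ : α ≤ 1) (hϰ : 0 < ϰ)
    (f : EuclideanSpace ℝ (Fin n) → ℝ) (hf : ContDiff ℝ ℓ f)
    (hHolder : ∀ x y : EuclideanSpace ℝ (Fin n),
      ‖iteratedFDeriv ℝ ℓ f x - iteratedFDeriv ℝ ℓ f y‖ ≤ ϰ * ‖x - y‖ ^ α)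
    (x₀ xt e : EuclideanSpace ℝ (Fin n)) (he : ‖e‖ = 1) (d : ℝ) (hd : 0 ≤ d)
    (x : EuclideanSpace ℝ (Fin n)) (hx : x = xt - d • e)
    (hdist : d ≤ ‖x - x₀‖) (htilde : ‖xt - x₀‖ ≤ 2 * ‖x - x₀‖)
    (hsign : (-1 : ℝ) ^ ℓ * dirDeriv ℓ f e x₀ = |dirDeriv ℓ f e x₀|) :
    |dirDeriv ℓ f e x₀| * d ^ ℓ / (ℓ.factorial : ℝ) ≤
      f x - f xt +
        (∑ j ∈ Finset.Icc 1 (ℓ - 1),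
          (-1 : ℝ) ^ (j + 1) * dirDeriv j f e xt * d ^ j / (j.factorial : ℝ)) +
        3 * ϰ * ‖x - x₀‖ ^ ((ℓ : ℝ) + α) := by
  have hl0 : ℓ - 1 + 1 = ℓ := by omega
  rcases eq_or_lt_of_le hd with h0 | hdpos
  · -- d = 0
    have hx' : x = xt := by rw [hx, ← h0]; simp
    subst hx'
    have hz : ∀ j ∈ Finset.Icc 1 (ℓ - 1),
        (-1 : ℝ) ^ (j + 1) * dirDeriv j f e x * d ^ j / (j.factorial : ℝ) = 0 := by
      intro j hj
      have : j ≠ 0 := by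
        simp only [Finset.mem_Icc] at hj; omega
      rw [← h0, zero_pow this]; ring
    rw [Finset.sum_congr rfl hz, Finset.sum_const_zero, ← h0,
      zero_pow (by omega : ℓ ≠ 0)]
    have : (0:ℝ) ≤ 3 * ϰ * ‖x - x₀‖ ^ ((ℓ : ℝ) + α) := by positivity
    simp only [mul_zero, zero_div]
    linarith
  · -- d > 0
    set h : ℝ := ‖x - x₀‖ with hh
    have hpos : 0 < h := lt_of_lt_of_le hdpos hdist
    set g : ℝ → ℝ := fun s : ℝ => f (xt + s • (-e)) with hgdef
    have hlinec : ContDiff ℝ ℓ (fun s : ℝ => xt + s • (-e)) :=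
      contDiff_const.add (contDiff_id.smul contDiff_const)
    have hg : ContDiff ℝ ℓ g := hf.comp hlinec
    have hxg : x = xt + d • (-e) := by rw [hx]; module
    have hs : UniqueDiffOn ℝ (Icc (0:ℝ) d) := uniqueDiffOn_Icc hdpos
    -- directional derivative identity
    have key : ∀ k : ℕ, k ≤ ℓ → ∀ t : ℝ,
        iteratedDeriv k g t = (-1:ℝ)^k * dirDeriv k f e (xt + t • (-e)) := by
      intro k hk t
      rw [my_line_deriv f hf xt (-e) hk t]
      have h1 : (fun _ : Fin k => -e) = fun i : Fin k => (fun _ : Fin k => (-1:ℝ)) i •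
          (fun _ : Fin k => e) i := by funext i; simp
      rw [h1, ContinuousMultilinearMap.map_smul_univ]
      simp [dirDeriv, Finset.prod_const]
    -- Taylor's theorem
    have hfA : ContDiffOn ℝ (ℓ - 1 : ℕ) g (Icc 0 d) :=
      (hg.of_le (by exact_mod_cast Nat.sub_le ℓ 1)).contDiffOn
    have hf' : DifferentiableOn ℝ (iteratedDerivWithin (ℓ - 1) g (Icc 0 d)) (Ioo 0 d) := by
      intro y hy
      have hdiff : DifferentiableAt ℝ (iteratedDeriv (ℓ - 1) g) y :=
        (hg.differentiable_iteratedDeriv (ℓ - 1)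
          (by exact_mod_cast Nat.sub_lt (by omega) one_pos)).differentiableAt
      exact (hdiff.differentiableWithinAt).congr
        (fun z hz => my_within_eq g hg hs (Nat.sub_le ℓ 1) z (Ioo_subset_Icc_self hz))
        (my_within_eq g hg hs (Nat.sub_le ℓ 1) y (Ioo_subset_Icc_self hy))
    obtain ⟨c, hc, hTay⟩ := taylor_mean_remainder_lagrange hdpos.ne
      (by rwa [uIcc_of_le hd]) (by rwa [uIcc_of_le hd, uIoo_of_lt hdpos])
    rw [uIcc_of_le hd] at hTay
    rw [uIoo_of_lt hdpos] at hc
    rw [hl0, sub_zero] at hTay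
    have hcIcc : c ∈ Icc (0:ℝ) d := Ioo_subset_Icc_self hc
    rw [my_within_eq g hg hs le_rfl c hcIcc, key ℓ le_rfl c] at hTay
    -- compute the Taylor polynomial
    rw [taylor_within_apply, hl0] at hTay
    have hpoly : ∑ k ∈ Finset.range ℓ, (((k.factorial:ℝ))⁻¹ * (d - 0) ^ k) •
        iteratedDerivWithin k g (Icc 0 d) 0
        = f xt - ∑ j ∈ Finset.Icc 1 (ℓ - 1),
            (-1 : ℝ) ^ (j + 1) * dirDeriv j f e xt * d ^ j / (j.factorial : ℝ) := by
      have hterm : ∀ k ∈ Finset.range ℓ, (((k.factorial:ℝ))⁻¹ * (d - 0) ^ k) •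
          iteratedDerivWithin k g (Icc 0 d) 0
          = ((k.factorial:ℝ))⁻¹ * d ^ k * ((-1:ℝ)^k * dirDeriv k f e xt) := by
        intro k hk
        have hk' : k ≤ ℓ := le_of_lt (Finset.mem_range.mp hk)
        rw [my_within_eq g hg hs hk' 0 (left_mem_Icc.mpr hd), key k hk' 0]
        simp [smul_eq_mul]
      rw [Finset.sum_congr rfl hterm]
      have hIcc : Finset.Icc 1 (ℓ-1) = Finset.Ico 1 ℓ := by
        ext k
        simp only [Finset.mem_Icc, Finset.mem_Ico]
        omega
      rw [hIcc, Finset.range_eq_Ico, Finset.sum_eq_sum_Ico_succ_bot (by omega : 0 < ℓ)]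
      have h0' : dirDeriv 0 f e xt = f xt := by simp [dirDeriv]
      rw [sub_eq_add_neg, ← Finset.sum_neg_distrib]
      congr 1
      · simp [h0']
      · refine Finset.sum_congr rfl fun k hk => ?_
        ring
    rw [hpoly] at hTay
    -- hTay : g d - (f xt - S) = ((-1)^ℓ * dirDeriv ℓ f e z) * d^ℓ / ℓ!
    have hgd : g d = f x := by rw [hxg]
    set z := xt + c • (-e) with hz
    set D₀ := dirDeriv ℓ f e x₀ with hD₀
    set Dz := dirDeriv ℓ f e z with hDz
    -- Hölder bound at z
    have hdiffb : |D₀ - Dz| ≤ ϰ * ‖x₀ - z‖ ^ α := by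
      have h1 := (iteratedFDeriv ℝ ℓ f x₀ - iteratedFDeriv ℝ ℓ f z).le_opNorm
        (fun _ : Fin ℓ => e)
      have h2 : (iteratedFDeriv ℝ ℓ f x₀ - iteratedFDeriv ℝ ℓ f z) (fun _ : Fin ℓ => e)
          = D₀ - Dz := by
        rw [ContinuousMultilinearMap.sub_apply]; rfl
      rw [h2] at h1
      simp only [he, Finset.prod_const_one, mul_one, Real.norm_eq_abs] at h1
      exact h1.trans (hHolder x₀ z)
    have hc3 : ‖x₀ - z‖ ≤ 3 * h := by
      have hzz : x₀ - z = (x₀ - xt) + c • e := by rw [hz]; module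
      rw [hzz]
      calc ‖(x₀ - xt) + c • e‖ ≤ ‖x₀ - xt‖ + ‖c • e‖ := norm_add_le _ _
        _ = ‖xt - x₀‖ + c := by
            rw [norm_sub_rev, norm_smul, he, mul_one, Real.norm_eq_abs,
              abs_of_pos hc.1]
        _ ≤ 2 * h + d := add_le_add htilde hc.2.le
        _ ≤ 3 * h := by linarith
    have hr : ϰ * ‖x₀ - z‖ ^ α ≤ 3 * ϰ * h ^ α := by
      have h1 : ‖x₀ - z‖ ^ α ≤ (3 * h) ^ α :=
        Real.rpow_le_rpow (norm_nonneg _) hc3 hα₀.le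
      have h2 : (3 * h) ^ α = (3:ℝ) ^ α * h ^ α :=
        Real.mul_rpow (by norm_num) hpos.le
      have h3 : (3:ℝ) ^ α ≤ 3 := by
        calc (3:ℝ) ^ α ≤ (3:ℝ) ^ (1:ℝ) :=
              Real.rpow_le_rpow_of_exponent_le (by norm_num) hα₁
          _ = 3 := Real.rpow_one 3
      have h4 : (0:ℝ) ≤ h ^ α := Real.rpow_nonneg hpos.le α
      calc ϰ * ‖x₀ - z‖ ^ α ≤ ϰ * ((3 * h) ^ α) :=
            mul_le_mul_of_nonneg_left h1 hϰ.le
        _ = ϰ * ((3:ℝ) ^ α * h ^ α) := by rw [h2]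
        _ ≤ ϰ * (3 * h ^ α) :=
            mul_le_mul_of_nonneg_left (mul_le_mul_of_nonneg_right h3 h4) hϰ.le
        _ = 3 * ϰ * h ^ α := by ring
    have habs : (-1:ℝ)^ℓ * (D₀ - Dz) ≤ |D₀ - Dz| := by
      calc (-1:ℝ)^ℓ * (D₀ - Dz) ≤ |(-1:ℝ)^ℓ * (D₀ - Dz)| := le_abs_self _
        _ = |D₀ - Dz| := by
            rw [abs_mul, abs_pow, abs_neg, abs_one, one_pow, one_mul]
    have hDa : |D₀| - 3 * ϰ * h ^ α ≤ (-1:ℝ)^ℓ * Dz := by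
      have : (-1:ℝ)^ℓ * Dz = (-1:ℝ)^ℓ * D₀ - (-1:ℝ)^ℓ * (D₀ - Dz) := by ring
      rw [this, hsign]
      linarith [habs.trans (hdiffb.trans hr)]
    -- final assembly
    have hmain : f x - f xt + (∑ j ∈ Finset.Icc 1 (ℓ - 1),
        (-1 : ℝ) ^ (j + 1) * dirDeriv j f e xt * d ^ j / (j.factorial : ℝ))
        = ((-1:ℝ)^ℓ * Dz) * d ^ ℓ / (ℓ.factorial : ℝ) := by
      rw [← hgd]; linarith [hTay]
    have hfac : (1:ℝ) ≤ (ℓ.factorial : ℝ) := by exact_mod_cast ℓ.factorial_pos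
    have hA : (0:ℝ) ≤ d ^ ℓ / (ℓ.factorial : ℝ) := by positivity
    have hdl : d ^ ℓ / (ℓ.factorial : ℝ) ≤ h ^ ℓ := by
      calc d ^ ℓ / (ℓ.factorial : ℝ) ≤ d ^ ℓ := div_le_self (pow_nonneg hd ℓ) hfac
        _ ≤ h ^ ℓ := pow_le_pow_left₀ hd hdist ℓ
    have hrpow : h ^ ((ℓ : ℝ) + α) = h ^ ℓ * h ^ α := by
      rw [Real.rpow_add hpos, Real.rpow_natCast]
    have h4 : (0:ℝ) ≤ h ^ α := Real.rpow_nonneg hpos.le α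
    have hterm2 : 3 * ϰ * h ^ α * (d ^ ℓ / (ℓ.factorial : ℝ)) ≤ 3 * ϰ * h ^ ((ℓ:ℝ) + α) := by
      rw [hrpow]
      calc 3 * ϰ * h ^ α * (d ^ ℓ / (ℓ.factorial : ℝ))
          ≤ 3 * ϰ * h ^ α * h ^ ℓ :=
            mul_le_mul_of_nonneg_left hdl (by positivity)
        _ = 3 * ϰ * (h ^ ℓ * h ^ α) := by ring
    have hmul := mul_le_mul_of_nonneg_right hDa hA
    rw [hmain]
    simp only [div_eq_mul_inv] at hmul hterm2 ⊢
    linarith [hmul, hterm2]
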